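/- Let X be a nonnegative integrable random variable with E(X) ≤ 1, Pr(X = 0) = 1 − p, Pr(X ≥ 1) = p for some p ∈ (0, 1/3], and let λ > 1/(2(1−p)). Then E(X) − λ·E(|X − E(X)|) ≤ 0, with equality if and only if E(X) = 0. -/

import Mathlib

open MeasureTheory

/-- For a nonnegative integrable X with E(X) ≤ 1, Pr(X = 0) = 1 - p, Pr(X ≥ 1) = p,
    p ∈ (0, 1/3], and λ > 1/(2(1-p)), the MAD-penalized expectation is ≤ 0,
    with equality iff E(X) = 0. -/
theorem madpe_nonpos {Ω : Type*} [MeasurableSpace Ω] (μ : Measure Ω)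
    [IsProbabilityMeasure μ] (X : Ω → ℝ) (hX : Integrable X μ)
    (hpos : ∀ ω, 0 ≤ X ω) (hE : (∫ ω, X ω ∂μ) ≤ 1)
    (p : ℝ) (hp : p ∈ Set.Ioc 0 (1/3 : ℝ))
    (hzero : μ {ω | X ω = 0} = ENNReal.ofReal (1 - p))
    (hone : μ {ω | 1 ≤ X ω} = ENNReal.ofReal p)
    (lam : ℝ) (hlam : 1 / (2 * (1 - p)) < lam) :
    (∫ ω, X ω ∂μ) - lam * (∫ ω, |X ω - ∫ ω', X ω' ∂μ| ∂μ) ≤ 0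
      ∧ ((∫ ω, X ω ∂μ) - lam * (∫ ω, |X ω - ∫ ω', X ω' ∂μ| ∂μ) = 0
          ↔ (∫ ω, X ω ∂μ) = 0) := by
  obtain ⟨hp0, hp3⟩ := hp
  have h1p : (0:ℝ) < 1 - p := by linarith
  set m := ∫ ω, X ω ∂μ with hm
  have hm0 : 0 ≤ m := integral_nonneg hpos
  have hlam0 : 0 < lam := lt_trans (by positivity) hlam
  have hlam1 : 1 < 2 * lam * (1 - p) := by
    rw [div_lt_iff₀ (by positivity)] at hlam; nlinarith
  -- measurable representative
  have hsm := hX.1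
  set Y := hsm.mk X with hY
  have hYmeas : StronglyMeasurable Y := hsm.stronglyMeasurable_mk
  have hae : X =ᵐ[μ] Y := hsm.ae_eq_mk
  set A : Set Ω := {ω | Y ω = 0} with hA
  set B : Set Ω := {ω | 1 ≤ Y ω} with hB
  have hAmeas : MeasurableSet A := hYmeas.measurable (measurableSet_singleton 0)
  have hBmeas : MeasurableSet B := hYmeas.measurable measurableSet_Ici
  have hμA : μ A = ENNReal.ofReal (1 - p) := by
    rw [← hzero]
    apply measure_congr
    rw [Filter.eventuallyEq_set]
    filter_upwards [hae] with ω h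
    simp [A, Set.mem_setOf_eq, h]
  have hμB : μ B = ENNReal.ofReal p := by
    rw [← hone]
    apply measure_congr
    rw [Filter.eventuallyEq_set]
    filter_upwards [hae] with ω h
    simp [B, Set.mem_setOf_eq, h]
  have hd : Disjoint A B := by
    rw [Set.disjoint_left]
    intro ω h1 h2
    have h1' : Y ω = 0 := h1
    have h2' : (1:ℝ) ≤ Y ω := h2
    linarith
  have hunion : μ (A ∪ B) = 1 := by
    rw [measure_union hd hBmeas, hμA, hμB,
      ← ENNReal.ofReal_add (by linarith) hp0.le]
    norm_num
  have hcompl : μ (A ∪ B)ᶜ = 0 := by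
    rw [measure_compl (hAmeas.union hBmeas) (measure_ne_top μ _), hunion,
      measure_univ, tsub_self]
  have horY : ∀ᵐ ω ∂μ, ω ∈ A ∪ B := by
    rw [ae_iff]
    convert hcompl using 2
    rfl
  -- pointwise bound
  have hptwise : ∀ᵐ ω ∂μ,
      (X ω - m) + A.indicator (fun _ => 2*m) ω ≤ |X ω - m| := by
    filter_upwards [hae, horY] with ω hxy hmem
    rcases hmem with h0 | h1
    · have hx0 : X ω = 0 := by rw [hxy]; exact h0
      rw [Set.indicator_of_mem h0, hx0]
      have habs : |(0:ℝ) - m| = m := by rw [zero_sub, abs_neg, abs_of_nonneg hm0]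
      rw [habs]; linarith
    · have hnA : ω ∉ A := by
        intro hA0
        have h1' : Y ω = 0 := hA0
        have h2' : (1:ℝ) ≤ Y ω := h1
        linarith
      rw [Set.indicator_of_notMem hnA]
      simpa using le_abs_self (X ω - m)
  have hInd : Integrable (A.indicator (fun _ => 2*m)) μ :=
    (integrable_const _).indicator hAmeas
  have hsubInt : Integrable (fun ω => X ω - m) μ := hX.sub (integrable_const m)
  have hRHSInt : Integrable (fun ω => |X ω - m|) μ := hsubInt.abs
  have hLHSInt : Integrable (fun ω => (X ω - m) + A.indicator (fun _ => 2*m) ω) μ :=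
    hsubInt.add hInd
  have hint := integral_mono_ae hLHSInt hRHSInt hptwise
  have hcomp : ∫ ω, ((X ω - m) + A.indicator (fun _ => 2*m) ω) ∂μ = 2*m*(1-p) := by
    rw [integral_add hsubInt hInd, integral_sub hX (integrable_const m),
      integral_indicator_const _ hAmeas, measureReal_def, hμA, ENNReal.toReal_ofReal h1p.le,
      integral_const]
    simp [measure_univ, smul_eq_mul]
    ring
  rw [hcomp] at hint
  -- hint : 2*m*(1-p) ≤ ∫ ω, |X ω - m| ∂μ
  set I := ∫ ω, |X ω - m| ∂μ with hI
  have hmain : m - lam * I ≤ 0 := by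
    nlinarith [mul_le_mul_of_nonneg_left hint hlam0.le,
      mul_nonneg hm0 (by linarith : (0:ℝ) ≤ 2*lam*(1-p) - 1)]
  refine ⟨hmain, ?_, ?_⟩
  · intro heq
    by_contra hne
    have hmpos : 0 < m := lt_of_le_of_ne hm0 (Ne.symm hne)
    nlinarith [mul_le_mul_of_nonneg_left hint hlam0.le,
      mul_lt_mul_of_pos_left hlam1 hmpos]
  · intro h0
    have hX0 : X =ᵐ[μ] 0 := by
      rw [← integral_eq_zero_iff_of_nonneg_ae
        (Filter.Eventually.of_forall hpos) hX]
      exact h0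
    have hIzero : I = 0 := by
      rw [hI]
      rw [integral_eq_zero_iff_of_nonneg_ae]
      · filter_upwards [hX0] with ω h
        simp [h, h0]
      · filter_upwards with ω; positivity
      · exact hRHSInt
    rw [h0, hIzero]
    ring
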